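/- Let G be a finite non-abelian p-group and A a finite abelian p-group, and suppose G * A is a central product of G and A. Then G * A is a DC-group if and only if G is a DC-group. Moreover, DS(G * A) = DS(G). -/

import Mathlib

open scoped Pointwise
open scoped commutatorElement

private theorem central_comm_left {X : Type*} [Group X] (g h z : X)
    (hc : ∀ y, z * y = y * z) : ⁅g * z, h⁆ = ⁅g, h⁆ := by
  simp only [commutatorElement_def, mul_inv_rev]
  calc g * z * h * (z⁻¹ * g⁻¹) * h⁻¹ = g * (z * h) * z⁻¹ * g⁻¹ * h⁻¹ := by group
    _ = g * (h * z) * z⁻¹ * g⁻¹ * h⁻¹ := by rw [hc h]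
    _ = g * h * g⁻¹ * h⁻¹ := by group

private theorem central_comm_right {X : Type*} [Group X] (g h z : X)
    (hc : ∀ y, z * y = y * z) : ⁅g, h * z⁆ = ⁅g, h⁆ := by
  simp only [commutatorElement_def, mul_inv_rev]
  calc g * (h * z) * g⁻¹ * (z⁻¹ * h⁻¹) = g * h * (z * g⁻¹) * z⁻¹ * h⁻¹ := by group
    _ = g * h * (g⁻¹ * z) * z⁻¹ * h⁻¹ := by rw [hc g⁻¹]
    _ = g * h * g⁻¹ * h⁻¹ := by group

/-- A group is a `DC`-group if the set of derived subgroups of its subgroups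
is a chain under inclusion. -/
def IsDCGroup (G : Type*) [Group G] : Prop :=
  ∀ H K : Subgroup G, ⁅H, H⁆ ≤ ⁅K, K⁆ ∨ ⁅K, K⁆ ≤ ⁅H, H⁆

theorem central_product_dc (p : ℕ) [Fact p.Prime] (X : Type*) [Group X] [Finite X]
    (G A : Subgroup X) (hX : IsPGroup p X)
    (hGna : ¬ ∀ a ∈ G, ∀ b ∈ G, a * b = b * a)
    (hAab : ∀ a ∈ A, ∀ b ∈ A, a * b = b * a)
    (hprod : G ⊔ A = ⊤) (hcomm : ⁅G, A⁆ = (⊥ : Subgroup X)) :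
    (IsDCGroup X ↔ IsDCGroup G) ∧
    {S : Subgroup X | ∃ H : Subgroup X, S = ⁅H, H⁆} =
      {S : Subgroup X | ∃ H : Subgroup X, H ≤ G ∧ S = ⁅H, H⁆} := by
  -- A is central
  have hcenter : ∀ a ∈ A, ∀ x : X, a * x = x * a := by
    intro a ha x
    have hx : x ∈ Subgroup.centralizer {a} := by
      have hle : G ⊔ A ≤ Subgroup.centralizer {a} := by
        apply sup_le
        · intro g hg
          rw [Subgroup.mem_centralizer_iff]
          simp only [Set.mem_singleton_iff, forall_eq]
          have h1 : ⁅g, a⁆ ∈ ⁅G, A⁆ := Subgroup.commutator_mem_commutator hg ha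
          rw [hcomm, Subgroup.mem_bot, commutatorElement_eq_one_iff_mul_comm] at h1
          exact h1.symm
        · intro b hb
          rw [Subgroup.mem_centralizer_iff]
          simp only [Set.mem_singleton_iff, forall_eq]
          exact hAab a ha b hb
      exact hle (hprod ▸ Subgroup.mem_top x)
    have h3 := Subgroup.mem_centralizer_iff.mp hx
    simp only [Set.mem_singleton_iff, forall_eq] at h3
    exact h3
  have hAnormal : A.Normal := by
    constructor
    intro a ha g
    have : g * a * g⁻¹ = a := by rw [← hcenter a ha g]; group
    rwa [this]
  -- decomposition of elements of H ⊔ A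
  have hdecomp : ∀ (H : Subgroup X), ∀ x ∈ H ⊔ A, ∃ h ∈ H, ∃ a ∈ A, h * a = x := by
    intro H x hx
    have h2 := Subgroup.mul_normal H A
    have : x ∈ (H : Set X) * (A : Set X) := by rw [← h2]; exact hx
    simpa [Set.mem_mul] using this
  -- commutator of elements with central parts
  have hcommel : ∀ (h₁ h₂ a₁ a₂ : X), a₁ ∈ A → a₂ ∈ A →
      ⁅h₁ * a₁, h₂ * a₂⁆ = ⁅h₁, h₂⁆ := by
    intro h₁ h₂ a₁ a₂ ha₁ ha₂
    rw [central_comm_left _ _ _ (hcenter a₁ ha₁),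
      central_comm_right _ _ _ (hcenter a₂ ha₂)]
  -- commutator of H ⊔ A equals commutator of H
  have hkey : ∀ H : Subgroup X, ⁅H ⊔ A, H ⊔ A⁆ = ⁅H, H⁆ := by
    intro H
    apply le_antisymm
    · rw [Subgroup.commutator_le]
      intro g hg h hh
      obtain ⟨h₁, hh₁, a₁, ha₁, rfl⟩ := hdecomp H g hg
      obtain ⟨h₂, hh₂, a₂, ha₂, rfl⟩ := hdecomp H h hh
      rw [hcommel h₁ h₂ a₁ a₂ ha₁ ha₂]
      exact Subgroup.commutator_mem_commutator hh₁ hh₂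
    · exact Subgroup.commutator_mono le_sup_left le_sup_left
  -- the projection K := G ⊓ (H ⊔ A) has the same derived subgroup
  have hproj : ∀ H : Subgroup X, G ⊓ (H ⊔ A) ≤ G ∧
      ⁅G ⊓ (H ⊔ A), G ⊓ (H ⊔ A)⁆ = ⁅H, H⁆ := by
    intro H
    refine ⟨inf_le_left, ?_⟩
    have hsup : G ⊓ (H ⊔ A) ⊔ A = H ⊔ A := by
      apply le_antisymm
      · exact sup_le inf_le_right le_sup_right
      · apply sup_le _ le_sup_right
        intro h hh
        have hht : h ∈ (⊤ : Subgroup X) := Subgroup.mem_top h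
        rw [← hprod] at hht
        obtain ⟨g, hg, a, ha, rfl⟩ := hdecomp G h hht
        have hgmem : g ∈ G ⊓ (H ⊔ A) := by
          refine ⟨hg, ?_⟩
          have he : g = (g * a) * a⁻¹ := by group
          rw [he]
          exact mul_mem (Subgroup.mem_sup_left hh) (Subgroup.mem_sup_right (inv_mem ha))
        exact mul_mem (Subgroup.mem_sup_left hgmem) (Subgroup.mem_sup_right ha)
    rw [← hkey (G ⊓ (H ⊔ A)), hsup, hkey H]
  constructor
  · constructor
    · -- X DC → G DC
      intro hDC H K
      rcases hDC (H.map G.subtype) (K.map G.subtype) with h | h <;>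
        [left; right] <;>
      · rw [← Subgroup.map_commutator, ← Subgroup.map_commutator] at h
        exact (Subgroup.map_le_map_iff_of_injective G.subtype_injective).mp h
    · -- G DC → X DC
      intro hDC H K
      obtain ⟨hH1, hH2⟩ := hproj H
      obtain ⟨hK1, hK2⟩ := hproj K
      set H' := G ⊓ (H ⊔ A) with hH'
      set K' := G ⊓ (K ⊔ A) with hK'
      have mapH : (H'.subgroupOf G).map G.subtype = H' := by
        rw [Subgroup.subgroupOf_map_subtype, inf_eq_left.mpr hH1]
      have mapK : (K'.subgroupOf G).map G.subtype = K' := by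
        rw [Subgroup.subgroupOf_map_subtype, inf_eq_left.mpr hK1]
      rcases hDC (H'.subgroupOf G) (K'.subgroupOf G) with h | h <;>
        [left; right] <;>
      · have hm := Subgroup.map_mono (f := G.subtype) h
        rw [Subgroup.map_commutator, Subgroup.map_commutator, mapH, mapK] at hm
        rw [← hH2, ← hK2]; exact hm
  · ext S
    simp only [Set.mem_setOf_eq]
    constructor
    · rintro ⟨H, rfl⟩
      obtain ⟨h1, h2⟩ := hproj H
      exact ⟨G ⊓ (H ⊔ A), h1, h2.symm⟩
    · rintro ⟨H, _, rfl⟩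
      exact ⟨H, rfl⟩
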